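/- Let p ∈ [0,1]. The supremum of (1−p)²·a + p(1−p)·b + p(1−p)·c − p²·d over all a, b, c, d ∈ [−1,1] satisfying |arcsin a + arcsin b + arcsin c − arcsin d| ≤ π equals: 1 − 2p² if 0 ≤ p ≤ 1 − 1/√2; √2·(1 − 2p(1−p)) if 1 − 1/√2 ≤ p ≤ 1/√2; and 4p − 2p² − 1 if 1/√2 ≤ p ≤ 1. Moreover this supremum is attained. -/
import Mathlib

open Real

private lemma chsh_l1 (p q u v : ℝ) :
    q * Real.sin u + p * Real.sin v ≤ Real.sqrt (q^2 + p^2 - 2*p*q*Real.cos (u+v)) := by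
  have hrad : 0 ≤ q^2 + p^2 - 2*p*q*Real.cos (u+v) := by
    nlinarith [Real.neg_one_le_cos (u+v), Real.cos_le_one (u+v), sq_nonneg (q-p), sq_nonneg (q+p)]
  rcases le_or_gt (q * Real.sin u + p * Real.sin v) 0 with h | h
  · exact h.trans (Real.sqrt_nonneg _)
  · rw [Real.le_sqrt h.le hrad, Real.cos_add]
    nlinarith [sq_nonneg (q*Real.cos u - p*Real.cos v), Real.sin_sq_add_cos_sq u,
      Real.sin_sq_add_cos_sq v]

set_option maxHeartbeats 1600000 in
private lemma chsh_l2 (p t : ℝ) (hp0 : 0 ≤ p) (hp1 : p ≤ 1) (ht0 : -1 ≤ t) (ht1 : t ≤ 1) :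
    (1-p) * Real.sqrt ((1-p)^2 + p^2 - 2*p*(1-p)*t) + p * Real.sqrt ((1-p)^2 + p^2 + 2*p*(1-p)*t)
      ≤ (if p ≤ 1 - 1 / Real.sqrt 2 then 1 - 2 * p ^ 2
         else if p ≤ 1 / Real.sqrt 2 then Real.sqrt 2 * (1 - 2 * p * (1 - p))
         else 4 * p - 2 * p ^ 2 - 1) := by
  have hq0 : (0:ℝ) ≤ 1 - p := by linarith
  have hpq : 0 ≤ p * (1-p) := mul_nonneg hp0 hq0
  have hA : 0 ≤ (1-p)^2 + p^2 - 2*p*(1-p)*t := by nlinarith [sq_nonneg (1-2*p)]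
  have hB : 0 ≤ (1-p)^2 + p^2 + 2*p*(1-p)*t := by nlinarith [sq_nonneg (1-2*p)]
  set s := Real.sqrt ((1-p)^2 + p^2 - 2*p*(1-p)*t) with hsdef
  set r := Real.sqrt ((1-p)^2 + p^2 + 2*p*(1-p)*t) with hrdef
  have hs0 : 0 ≤ s := Real.sqrt_nonneg _
  have hr0 : 0 ≤ r := Real.sqrt_nonneg _
  have hs2 : s^2 = (1-p)^2 + p^2 - 2*p*(1-p)*t := Real.sq_sqrt hA
  have hr2 : r^2 = (1-p)^2 + p^2 + 2*p*(1-p)*t := Real.sq_sqrt hB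
  have hc2 : Real.sqrt 2 ^ 2 = 2 := Real.sq_sqrt (by norm_num)
  have hc0 : (0:ℝ) < Real.sqrt 2 := Real.sqrt_pos.mpr (by norm_num)
  set c := Real.sqrt 2 with hcdef
  have hc1 : 1 < c := by nlinarith
  have hc3 : c < 2 := by nlinarith
  have hinv : 1 / c = c / 2 := by
    rw [div_eq_div_iff hc0.ne' (by norm_num)]
    nlinarith
  clear hsdef hrdef hcdef
  clear_value s r c
  split_ifs with h1 h2
  · rw [hinv] at h1
    have hq_ge : c/2 ≤ 1 - p := by linarith
    have hD : (0:ℝ) ≤ 2*p^2 - 4*p + 1 := by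
      nlinarith [mul_le_mul hq_ge hq_ge (by positivity) hq0]
    have hqp : (0:ℝ) < (1-p) - p := by linarith
    have key : 2*((1-p)-p)*(1 - 2*p^2) - 2*((1-p)-p)*((1-p)*s + p*r)
        = (1-p)*((1-p)-p)*(s-1)^2 + p*(r-((1-p)-p))^2
          + 2*(p*(1-p))*(2*p^2-4*p+1)*(1+t) := by
      linear_combination (-((1-p)*((1-p)-p))) * hs2 + (-p) * hr2
    have hnn : 0 ≤ ((1-p)-p) * ((1 - 2*p^2) - ((1-p)*s + p*r)) := by
      nlinarith [mul_nonneg (mul_nonneg hq0 hqp.le) (sq_nonneg (s-1)),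
        mul_nonneg hp0 (sq_nonneg (r-((1-p)-p))),
        mul_nonneg (mul_nonneg hpq hD) (by linarith : (0:ℝ) ≤ 1 + t)]
    have := (mul_nonneg_iff_of_pos_left hqp).mp hnn
    linarith
  · have hK : (0:ℝ) < (1-p)^2 + p^2 := by nlinarith [sq_nonneg (1-2*p)]
    have hid : ((1-p)*s + p*r)^2 + ((1-p)*r - p*s)^2 = (c*((1-p)^2+p^2))^2 := by
      linear_combination ((1-p)^2+p^2)*hs2 + ((1-p)^2+p^2)*hr2 + (-(((1-p)^2+p^2)^2))*hc2
    have hcs : ((1-p)*s + p*r)^2 ≤ (c*((1-p)^2+p^2))^2 := by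
      linarith [sq_nonneg ((1-p)*r - p*s), hid]
    have hgoal : (1-p)*s + p*r ≤ c * ((1-p)^2+p^2) := by
      rcases le_or_gt ((1-p)*s + p*r) 0 with h | h
      · exact h.trans (mul_nonneg hc0.le hK.le)
      · calc (1-p)*s + p*r = Real.sqrt (((1-p)*s + p*r)^2) := (Real.sqrt_sq h.le).symm
          _ ≤ Real.sqrt ((c*((1-p)^2+p^2))^2) := Real.sqrt_le_sqrt hcs
          _ = c*((1-p)^2+p^2) := Real.sqrt_sq (mul_nonneg hc0.le hK.le)
    calc (1-p)*s + p*r ≤ c * ((1-p)^2+p^2) := hgoal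
      _ = c * (1 - 2*p*(1-p)) := by ring
  · push_neg at h1 h2
    rw [hinv] at h2
    have hp_ge : c/2 < p := h2
    have hD : (0:ℝ) ≤ 2*p^2 - 1 := by
      nlinarith [mul_le_mul hp_ge.le hp_ge.le (by positivity) hp0]
    have hqp : (0:ℝ) < p - (1-p) := by linarith
    have key : 2*(p-(1-p))*(4*p - 2*p^2 - 1) - 2*(p-(1-p))*((1-p)*s + p*r)
        = p*(p-(1-p))*(r-1)^2 + (1-p)*(s-(p-(1-p)))^2
          + 2*(p*(1-p))*(2*p^2-1)*(1-t) := by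
      linear_combination (-(1-p)) * hs2 + (-(p*(p-(1-p)))) * hr2
    have hnn : 0 ≤ (p-(1-p)) * ((4*p - 2*p^2 - 1) - ((1-p)*s + p*r)) := by
      nlinarith [mul_nonneg (mul_nonneg hp0 hqp.le) (sq_nonneg (r-1)),
        mul_nonneg hq0 (sq_nonneg (s-(p-(1-p)))),
        mul_nonneg (mul_nonneg hpq hD) (by linarith : (0:ℝ) ≤ 1 - t)]
    have := (mul_nonneg_iff_of_pos_left hqp).mp hnn
    linarith

private lemma chsh_step (p α β γ η : ℝ) (hp0 : 0 ≤ p) (hp1 : p ≤ 1)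
    (hsum : α + β + γ + η = Real.pi) :
    (1-p)^2 * Real.sin α + p*(1-p)*Real.sin β + p*(1-p)*Real.sin γ + p^2*Real.sin η
      ≤ (if p ≤ 1 - 1 / Real.sqrt 2 then 1 - 2 * p ^ 2
         else if p ≤ 1 / Real.sqrt 2 then Real.sqrt 2 * (1 - 2 * p * (1 - p))
         else 4 * p - 2 * p ^ 2 - 1) := by
  have hq0 : (0:ℝ) ≤ 1 - p := by linarith
  have h1 := chsh_l1 p (1-p) α β
  have h2 : (1-p) * Real.sin γ + p * Real.sin η
      ≤ Real.sqrt ((1-p)^2 + p^2 + 2*p*(1-p)*Real.cos (α+β)) := by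
    have hcos : Real.cos (γ + η) = - Real.cos (α + β) := by
      rw [show γ + η = Real.pi - (α + β) by linarith, Real.cos_pi_sub]
    have := chsh_l1 p (1-p) γ η
    rwa [hcos, show (1-p)^2 + p^2 - 2*p*(1-p)*(-Real.cos (α+β))
      = (1-p)^2 + p^2 + 2*p*(1-p)*Real.cos (α+β) by ring] at this
  have hl2 := chsh_l2 p (Real.cos (α+β)) hp0 hp1 (Real.neg_one_le_cos _) (Real.cos_le_one _)
  calc (1-p)^2 * Real.sin α + p*(1-p)*Real.sin β + p*(1-p)*Real.sin γ + p^2*Real.sin η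
      = (1-p)*((1-p)*Real.sin α + p*Real.sin β) + p*((1-p)*Real.sin γ + p*Real.sin η) := by ring
    _ ≤ (1-p) * Real.sqrt ((1-p)^2 + p^2 - 2*p*(1-p)*Real.cos (α+β))
        + p * Real.sqrt ((1-p)^2 + p^2 + 2*p*(1-p)*Real.cos (α+β)) :=
        add_le_add (mul_le_mul_of_nonneg_left h1 hq0) (mul_le_mul_of_nonneg_left h2 hp0)
    _ ≤ _ := hl2


set_option maxHeartbeats 2000000 in
private lemma chsh_mid_mem (p : ℝ) (hp0 : 0 ≤ p) (hp1 : p ≤ 1)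
    (h1 : 1 - 1 / Real.sqrt 2 < p) (h2 : p ≤ 1 / Real.sqrt 2) :
    ∃ a b c d : ℝ,
        a ∈ Set.Icc (-1 : ℝ) 1 ∧ b ∈ Set.Icc (-1 : ℝ) 1 ∧
        c ∈ Set.Icc (-1 : ℝ) 1 ∧ d ∈ Set.Icc (-1 : ℝ) 1 ∧
        |Real.arcsin a + Real.arcsin b + Real.arcsin c - Real.arcsin d| ≤ Real.pi ∧
        Real.sqrt 2 * (1 - 2 * p * (1 - p))
          = (1 - p) ^ 2 * a + p * (1 - p) * b + p * (1 - p) * c - p ^ 2 * d := by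
  have hπ := Real.pi_pos
  obtain ⟨c, hcdef⟩ : ∃ y, y = Real.sqrt 2 := ⟨_, rfl⟩
  have hc2 : c ^ 2 = 2 := by rw [hcdef]; exact Real.sq_sqrt (by norm_num)
  have hc0 : (0:ℝ) < c := by rw [hcdef]; exact Real.sqrt_pos.mpr (by norm_num)
  rw [← hcdef] at h1 h2 ⊢
  have hc1 : 1 < c := by nlinarith
  have hc3 : c < 2 := by nlinarith
  have hinv : 1 / c = c / 2 := by
    rw [div_eq_div_iff hc0.ne' (by norm_num)]; nlinarith
  rw [hinv] at h1 h2
  have hp0' : 0 < p := by linarith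
  have hq0' : 0 < 1 - p := by linarith
  have hpq0 : 0 < p * (1-p) := mul_pos hp0' hq0'
  have hcp : c * p ≤ 1 := by
    linarith [mul_le_mul_of_nonneg_left h2 hc0.le, hc2]
  have hcq : c * (1-p) < 1 := by
    have := mul_lt_mul_of_pos_left (show 1 - p < c/2 by linarith) hc0
    nlinarith [hc2]
  have hpc : 1 < p * (c+2) := by
    have := mul_lt_mul_of_pos_left h1 (show (0:ℝ) < c + 2 by linarith)
    nlinarith [hc2]
  have h4q2 : (0:ℝ) < 4*(1-p)^2 := by positivity
  have h4pq : (0:ℝ) < 4*(p*(1-p)) := by linarith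
  have h4p2 : (0:ℝ) < 4*p^2 := by positivity
  obtain ⟨av, havdef⟩ : ∃ y, y = c*(3*(1-p)^2-p^2)/(4*(1-p)^2) := ⟨_, rfl⟩
  obtain ⟨bv, hbvdef⟩ : ∃ y, y = c*(p^2+(1-p)^2)/(4*(p*(1-p))) := ⟨_, rfl⟩
  obtain ⟨dv, hdvdef⟩ : ∃ y, y = c*((1-p)^2-3*p^2)/(4*p^2) := ⟨_, rfl⟩
  have hav2 : av ≤ 1 := by
    rw [havdef, div_le_one h4q2]
    have hE1 : 4*(1-p)^2 - c*(3*(1-p)^2-p^2) = c*(1-c*(1-p))*(p+(c-1)*(1-p)) := by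
      linear_combination ((-2:ℝ) + 4*p - 2*p^2 + c - 2*c*p + c*p^2) * hc2
    linarith [mul_nonneg (mul_nonneg hc0.le (by linarith : (0:ℝ) ≤ 1 - c*(1-p)))
      (by linarith [mul_nonneg (sub_nonneg.2 hc1.le) hq0'.le] : (0:ℝ) ≤ p+(c-1)*(1-p)), hE1]
  have hav1 : -1 ≤ av := by
    rw [havdef, le_div_iff₀ h4q2]
    have hE2 : c*(3*(1-p)^2-p^2) + 4*(1-p)^2 = c*((c+1)*(1-p)-p)*((c+1)*(1-p)+p) := by
      linear_combination ((-2:ℝ) + 4*p - 2*p^2 - c + 2*c*p - c*p^2) * hc2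
    linarith [mul_nonneg (mul_nonneg hc0.le (by linarith : (0:ℝ) ≤ (c+1)*(1-p)-p))
      (by linarith [mul_nonneg (sub_nonneg.2 hc1.le) hq0'.le] : (0:ℝ) ≤ (c+1)*(1-p)+p), hE2]
  have hE3 : 4*(p*(1-p)) - c*(p^2+(1-p)^2)
      = c*(c-1)*(2*(p*(1-p))-(c-1)) + c*(c-2*p)*(c-2*(1-p)) := by
    linear_combination ((-2:ℝ)*p + 2*p^2) * hc2
  have hX : (0:ℝ) ≤ 2*(p*(1-p))-(c-1) := by
    have hXid : 2*(p*(1-p))-(c-1) = (1-c*p)*(1-c*(1-p)) := by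
      linear_combination (-(p*(1-p)))*hc2
    rw [hXid]
    exact mul_nonneg (by linarith) (by linarith)
  have hE3nn : (0:ℝ) ≤ 4*(p*(1-p)) - c*(p^2+(1-p)^2) := by
    linarith [mul_nonneg (mul_nonneg hc0.le (sub_nonneg.2 hc1.le)) hX,
      mul_nonneg (mul_nonneg hc0.le (by linarith : (0:ℝ) ≤ c-2*p))
        (by linarith : (0:ℝ) ≤ c-2*(1-p)), hE3]
  have hbv2 : bv ≤ 1 := by
    rw [hbvdef, div_le_one h4pq]
    linarith [hE3nn]
  have hbhalf : c/2 ≤ bv := by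
    rw [hbvdef, le_div_iff₀ h4pq]
    linarith [mul_nonneg hc0.le (sq_nonneg (1-2*p))]
  have hbv1 : -1 ≤ bv := by linarith [hc0.le]
  have hdv2 : dv ≤ 1 := by
    rw [hdvdef, div_le_one h4p2]
    have hE4 : 4*p^2 - c*((1-p)^2-3*p^2) = c*((c+1)*p-(1-p))*((c+1)*p+(1-p)) := by
      linear_combination ((-2:ℝ)*p^2 - c*p^2) * hc2
    linarith [mul_nonneg (mul_nonneg hc0.le (by linarith [hpc] : (0:ℝ) ≤ (c+1)*p-(1-p)))
      (by linarith [mul_nonneg (sub_nonneg.2 hc1.le) hp0'.le] : (0:ℝ) ≤ (c+1)*p+(1-p)), hE4]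
  have hdv1 : -1 ≤ dv := by
    rw [hdvdef, le_div_iff₀ h4p2]
    have hE5 : c*((1-p)^2-3*p^2) + 4*p^2 = c*(1-c*p)*((1-p)+(c-1)*p) := by
      linear_combination ((-2:ℝ)*p^2 + c*p^2) * hc2
    linarith [mul_nonneg (mul_nonneg hc0.le (by linarith : (0:ℝ) ≤ 1-c*p))
      (by linarith [mul_nonneg (sub_nonneg.2 hc1.le) hp0'.le] : (0:ℝ) ≤ (1-p)+(c-1)*p), hE5]
  have hpne : p ≠ 0 := ne_of_gt hp0'
  have hqne : (1:ℝ) - p ≠ 0 := ne_of_gt hq0'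
  have hb2 : bv^2 = (p^2+(1-p)^2)^2/(8*(p*(1-p))^2) := by
    rw [hbvdef, div_pow, mul_pow, hc2, div_eq_div_iff (by positivity) (by positivity)]
    ring
  have ha2 : av^2 = (3*(1-p)^2-p^2)^2/(8*((1-p)^2)^2) := by
    rw [havdef, div_pow, mul_pow, hc2, div_eq_div_iff (by positivity) (by positivity)]
    ring
  have hE11 : 2*(8*p^2*(1-p)^2-(p^2+(1-p)^2)^2)
      = (4*(p*(1-p)) - c*(p^2+(1-p)^2))*(4*(p*(1-p)) + c*(p^2+(1-p)^2)) := by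
    linear_combination ((1:ℝ) - 4*p + 8*p^2 - 8*p^3 + 4*p^4) * hc2
  have hBnn : (0:ℝ) ≤ 4*(p*(1-p)) + c*(p^2+(1-p)^2) := by
    linarith [mul_nonneg hc0.le (by positivity : (0:ℝ) ≤ p^2+(1-p)^2)]
  have hNN : (0:ℝ) ≤ 8*p^2*(1-p)^2-(p^2+(1-p)^2)^2 := by
    linarith [mul_nonneg hE3nn hBnn, hE11]
  have h1a2 : (0:ℝ) ≤ 1 - av^2 := by nlinarith [mul_nonneg (by linarith : (0:ℝ) ≤ 1 - av) (by linarith : (0:ℝ) ≤ 1 + av)]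
  have hprod : Real.sqrt (1-av^2) * Real.sqrt (1-bv^2)
      = (8*p^2*(1-p)^2-(p^2+(1-p)^2)^2)/(8*(p*(1-p)^3)) := by
    rw [← Real.sqrt_mul h1a2, show (1-av^2)*(1-bv^2)
        = ((8*p^2*(1-p)^2-(p^2+(1-p)^2)^2)/(8*(p*(1-p)^3)))^2 from by
      rw [ha2, hb2]; field_simp; ring]
    exact Real.sqrt_sq (div_nonneg hNN (by positivity))
  obtain ⟨α, hαdef⟩ : ∃ y, y = Real.arcsin av := ⟨_, rfl⟩
  obtain ⟨β, hβdef⟩ : ∃ y, y = Real.arcsin bv := ⟨_, rfl⟩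
  have hαU : α ≤ Real.pi/2 := by rw [hαdef]; exact Real.arcsin_le_pi_div_two av
  have hαL : -(Real.pi/2) ≤ α := by rw [hαdef]; exact Real.neg_pi_div_two_le_arcsin av
  have hβU : β ≤ Real.pi/2 := by rw [hβdef]; exact Real.arcsin_le_pi_div_two bv
  have hsinα : Real.sin α = av := by rw [hαdef]; exact Real.sin_arcsin hav1 hav2
  have hsinβ : Real.sin β = bv := by rw [hβdef]; exact Real.sin_arcsin hbv1 hbv2
  have hcosα : Real.cos α = Real.sqrt (1-av^2) := by rw [hαdef, Real.cos_arcsin]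
  have hcosβ : Real.cos β = Real.sqrt (1-bv^2) := by rw [hβdef, Real.cos_arcsin]
  have hβ4 : Real.pi/4 ≤ β := by
    have h14 : Real.arcsin (c/2) = Real.pi/4 := by
      rw [show c/2 = Real.sin (Real.pi/4) by rw [Real.sin_pi_div_four, hcdef]]
      exact Real.arcsin_sin (by linarith) (by linarith)
    calc Real.pi/4 = Real.arcsin (c/2) := h14.symm
      _ ≤ β := by rw [hβdef]; exact Real.monotone_arcsin hbhalf
  have h1b : Real.sin (Real.pi/2 - 2*β) = 1 - 2*bv^2 := by
    rw [Real.sin_pi_div_two_sub, Real.cos_two_mul, Real.cos_sq', hsinβ]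
    ring
  have hkey : 1 - 2*bv^2 ≤ av := by
    have hP7 : c*p^2*(3*(1-p)^2-p^2) + (p^2-(1-p)^2)^2
        = (1-c*p)*((1-2*p)^2+2*p^2*(1-p)+c*(p*(1-p))) := by
      linear_combination (p^2 - p^3) * hc2
    have hP7nn : (0:ℝ) ≤ c*p^2*(3*(1-p)^2-p^2) + (p^2-(1-p)^2)^2 := by
      rw [hP7]
      exact mul_nonneg (by linarith)
        (by linarith [sq_nonneg (1-2*p), mul_nonneg (mul_nonneg hp0'.le hp0'.le) hq0'.le,
          mul_nonneg hc0.le hpq0.le])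
    rw [← sub_nonneg, hb2, havdef]
    rw [show c*(3*(1-p)^2-p^2)/(4*(1-p)^2) - (1 - 2*((p^2+(1-p)^2)^2/(8*(p*(1-p))^2)))
        = (c*p^2*(3*(1-p)^2-p^2) + (p^2-(1-p)^2)^2)/(4*(p*(1-p))^2) from by
      field_simp; ring]
    exact div_nonneg hP7nn (by positivity)
  have hαβ : Real.pi/2 ≤ α + 2*β := by
    have hmono := Real.monotone_arcsin hkey
    rw [← h1b, Real.arcsin_sin (by linarith) (by linarith), ← hαdef] at hmono
    linarith
  have hd_eq : dv = Real.sin (α + 2*β - Real.pi) := by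
    have hexp : Real.sin (α + 2*β - Real.pi)
        = -(Real.sin α * (1 - 2*Real.sin β^2) + (2*Real.sin β)*(Real.cos α * Real.cos β)) := by
      rw [Real.sin_sub_pi, Real.sin_add, Real.sin_two_mul, Real.cos_two_mul, Real.cos_sq']
      ring
    rw [hexp, hsinα, hsinβ, hcosα, hcosβ,
      show Real.sqrt (1-av^2) * Real.sqrt (1-bv^2)
        = (8*p^2*(1-p)^2-(p^2+(1-p)^2)^2)/(8*(p*(1-p)^3)) from hprod, hb2,
      havdef, hbvdef, hdvdef]
    field_simp
    ring
  have harcd : Real.arcsin dv = α + 2*β - Real.pi := by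
    rw [hd_eq]
    exact Real.arcsin_sin (by linarith) (by linarith)
  refine ⟨av, bv, bv, dv, Set.mem_Icc.mpr ⟨hav1, hav2⟩, Set.mem_Icc.mpr ⟨hbv1, hbv2⟩,
    Set.mem_Icc.mpr ⟨hbv1, hbv2⟩, Set.mem_Icc.mpr ⟨hdv1, hdv2⟩, ?_, ?_⟩
  · rw [← hαdef, ← hβdef, harcd,
      show α + β + β - (α + 2*β - Real.pi) = Real.pi by ring, abs_of_nonneg hπ.le]
  · rw [havdef, hbvdef, hdvdef]
    field_simp
    ring

set_option maxHeartbeats 1600000 in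
/-- for `p ∈ [0,1]`, the maximum of
`(1−p)²a + p(1−p)b + p(1−p)c − p²d` over `a,b,c,d ∈ [−1,1]` with
`|arcsin a + arcsin b + arcsin c − arcsin d| ≤ π` is `1 − 2p²` for `0 ≤ p ≤ 1 − 1/√2`,
`√2(1 − 2p(1−p))` for `1 − 1/√2 ≤ p ≤ 1/√2`, and `4p − 2p² − 1` for `1/√2 ≤ p ≤ 1`;
moreover the supremum is attained. -/
theorem chsh_correlation_optimum (p : ℝ) (hp0 : 0 ≤ p) (hp1 : p ≤ 1) :
    IsGreatest
      {x : ℝ | ∃ a b c d : ℝ,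
        a ∈ Set.Icc (-1 : ℝ) 1 ∧ b ∈ Set.Icc (-1 : ℝ) 1 ∧
        c ∈ Set.Icc (-1 : ℝ) 1 ∧ d ∈ Set.Icc (-1 : ℝ) 1 ∧
        |Real.arcsin a + Real.arcsin b + Real.arcsin c - Real.arcsin d| ≤ Real.pi ∧
        x = (1 - p) ^ 2 * a + p * (1 - p) * b + p * (1 - p) * c - p ^ 2 * d}
      (if p ≤ 1 - 1 / Real.sqrt 2 then 1 - 2 * p ^ 2
       else if p ≤ 1 / Real.sqrt 2 then Real.sqrt 2 * (1 - 2 * p * (1 - p))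
       else 4 * p - 2 * p ^ 2 - 1) := by
  have hπ := Real.pi_pos
  constructor
  · -- membership
    split_ifs with h1 h2
    · refine ⟨1, 1, 1, 1, Set.mem_Icc.mpr (by norm_num), Set.mem_Icc.mpr (by norm_num),
        Set.mem_Icc.mpr (by norm_num), Set.mem_Icc.mpr (by norm_num), ?_, by ring⟩
      rw [Real.arcsin_one,
        show Real.pi/2 + Real.pi/2 + Real.pi/2 - Real.pi/2 = Real.pi by ring,
        abs_of_nonneg hπ.le]
    · push_neg at h1
      exact chsh_mid_mem p hp0 hp1 h1 h2
    · refine ⟨-1, 1, 1, -1, Set.mem_Icc.mpr (by norm_num), Set.mem_Icc.mpr (by norm_num),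
        Set.mem_Icc.mpr (by norm_num), Set.mem_Icc.mpr (by norm_num), ?_, by ring⟩
      rw [Real.arcsin_one, Real.arcsin_neg_one,
        show -(Real.pi/2) + Real.pi/2 + Real.pi/2 - -(Real.pi/2) = Real.pi by ring,
        abs_of_nonneg hπ.le]
  · rintro x ⟨a, b, c, d, ⟨ha1, ha2⟩, ⟨hb1, hb2⟩, ⟨hc1, hc2⟩, ⟨hd1, hd2⟩, hcon, rfl⟩
    have hq0 : (0:ℝ) ≤ 1 - p := by linarith
    have hpq : (0:ℝ) ≤ p * (1-p) := mul_nonneg hp0 hq0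
    have hp2 : (0:ℝ) ≤ p^2 := sq_nonneg p
    have hsa : Real.sin (Real.arcsin a) = a := Real.sin_arcsin ha1 ha2
    have hsb : Real.sin (Real.arcsin b) = b := Real.sin_arcsin hb1 hb2
    have hsc : Real.sin (Real.arcsin c) = c := Real.sin_arcsin hc1 hc2
    have hsd : Real.sin (Real.arcsin d) = d := Real.sin_arcsin hd1 hd2
    have haL := Real.neg_pi_div_two_le_arcsin a; have haU := Real.arcsin_le_pi_div_two a
    have hbL := Real.neg_pi_div_two_le_arcsin b; have hbU := Real.arcsin_le_pi_div_two b
    have hcL := Real.neg_pi_div_two_le_arcsin c; have hcU := Real.arcsin_le_pi_div_two c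
    have hdL := Real.neg_pi_div_two_le_arcsin d; have hdU := Real.arcsin_le_pi_div_two d
    have hcon2 : Real.arcsin a + Real.arcsin b + Real.arcsin c - Real.arcsin d ≤ Real.pi :=
      (abs_le.mp hcon).2
    set A := Real.arcsin a with hA
    set B := Real.arcsin b with hB
    set C := Real.arcsin c with hC
    set D := Real.arcsin d with hD
    rw [← hsa, ← hsb, ← hsc, ← hsd]
    by_cases hI : A + B + C ≤ Real.pi/2
    · by_cases h0 : 0 ≤ A + B
      · have hstep := chsh_step p A B (Real.pi/2 - A - B) (Real.pi/2) hp0 hp1 (by ring)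
        rw [Real.sin_pi_div_two] at hstep
        have hmono : Real.sin C ≤ Real.sin (Real.pi/2 - A - B) :=
          Real.strictMonoOn_sin.monotoneOn ⟨hcL, hcU⟩ ⟨by linarith, by linarith⟩ (by linarith)
        have h3 : p*(1-p)*Real.sin C ≤ p*(1-p)*Real.sin (Real.pi/2 - A - B) :=
          mul_le_mul_of_nonneg_left hmono hpq
        have h4 := mul_le_mul_of_nonneg_left (Real.neg_one_le_sin D) hp2
        linarith
      · have hstep := chsh_step p A (-A) (Real.pi/2) (Real.pi/2) hp0 hp1 (by ring)
        rw [Real.sin_pi_div_two] at hstep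
        have hmono : Real.sin B ≤ Real.sin (-A) :=
          Real.strictMonoOn_sin.monotoneOn ⟨hbL, hbU⟩ ⟨by linarith, by linarith⟩ (by linarith)
        have h3 : p*(1-p)*Real.sin B ≤ p*(1-p)*Real.sin (-A) :=
          mul_le_mul_of_nonneg_left hmono hpq
        have h3' : p*(1-p)*Real.sin C ≤ p*(1-p)*1 :=
          mul_le_mul_of_nonneg_left (Real.sin_le_one C) hpq
        have h4 := mul_le_mul_of_nonneg_left (Real.neg_one_le_sin D) hp2
        linarith
    · push_neg at hI
      have hstep := chsh_step p A B C (Real.pi - A - B - C) hp0 hp1 (by ring)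
      have hmono : Real.sin (-(Real.pi - A - B - C)) ≤ Real.sin D :=
        Real.strictMonoOn_sin.monotoneOn ⟨by linarith, by linarith⟩ ⟨hdL, hdU⟩ (by linarith)
      rw [Real.sin_neg] at hmono
      have h4 := mul_le_mul_of_nonneg_left hmono hp2
      linarith
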